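/- arXiv:2402.04062 — 2 statements merged into one kernel-verified Lean document; each statement's English description precedes it below -/
import Mathlib

section
/- Let G = (V, E, R, c, η) be a knowledge graph with pairwise coloring η. For all ℓ ≥ 0, the pairwise coloring hcwl_2^(ℓ) computed on G coincides with the node coloring hrwl_1^(ℓ) computed on the auxiliary knowledge graph G²: for all u, v, u', v' ∈ V, hcwl_2^(ℓ)(G, u, v) = hcwl_2^(ℓ)(G, u', v') if and only if hrwl_1^(ℓ)(G², (u, v)) = hrwl_1^(ℓ)(G², (u', v')). -/
/-- A relational hypergraph over node set `V`, relation types `R` with arities `ar`.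
A hyperedge (fact) `r(u₁,…,u_k)` is a pair of a relation type `r` and the tuple of
its nodes, of length `k = ar r`. -/
structure RelHG (V R : Type) (ar : R → ℕ) where
  edges : Finset (Σ r : R, Fin (ar r) → V)

variable {V R D : Type} {ar : R → ℕ}

/-- `E(v)`: the set of edge–position pairs `(e, i)` with `e(i) = v`. -/
def RelHG.incid [DecidableEq V] (H : RelHG V R ar) (v : V) :
    Finset (Σ e : Σ r : R, Fin (ar r) → V, Fin (ar e.1)) :=
  (H.edges.sigma fun e => (Finset.univ : Finset (Fin (ar e.1)))).filter
    fun p => p.1.2 p.2 = v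

/-- Colors used by the canonical (`τ = id`) hypergraph relational 1-WL test after `ℓ`
rounds, starting from colors in `D`. -/
def WLC (D R : Type) : ℕ → Type :=
  fun ℓ => Nat.rec D (fun _ ih => ih × Multiset (Set (ih × ℕ) × R)) ℓ

/-- The hypergraph relational 1-WL test `hrwl₁`, with the canonical injective `τ`
(pairing), starting from the node coloring `c`. -/
def RelHG.hrwl [DecidableEq V] (H : RelHG V R ar) (c : V → D) :
    (ℓ : ℕ) → V → WLC D R ℓ
  | 0 => c
  | ℓ + 1 => fun v =>
      ⟨RelHG.hrwl H c ℓ v,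
        (H.incid v).val.map fun ei =>
          ({p : WLC D R ℓ × ℕ |
              ∃ j : Fin (ar ei.1.1), j ≠ ei.2 ∧
                p = (RelHG.hrwl H c ℓ (ei.1.2 j), (j : ℕ))},
            ei.1.1)⟩

/-- A hypergraph relational MPNN (HR-MPNN): layer dimensions `d`, message spaces `M`,
aggregation spaces `A`, and arbitrary relation-specific message, aggregation and
update functions for every layer. -/
structure HRMPNN (R : Type) where
  d : ℕ → ℕ
  M : ℕ → Type
  A : ℕ → Type
  msg : (ℓ : ℕ) → R → Set ((Fin (d ℓ) → ℝ) × ℕ) → M ℓ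
  agg : (ℓ : ℕ) → (Fin (d ℓ) → ℝ) → Multiset (M ℓ) → A ℓ
  up : (ℓ : ℕ) → (Fin (d ℓ) → ℝ) → A ℓ → Fin (d (ℓ + 1)) → ℝ

/-- The feature maps `h⁽ℓ⁾` computed by an HR-MPNN on a relational hypergraph `H`
from the initial feature map `x`. -/
def HRMPNN.h [DecidableEq V] (net : HRMPNN R) (H : RelHG V R ar)
    (x : V → Fin (net.d 0) → ℝ) : (ℓ : ℕ) → V → Fin (net.d ℓ) → ℝ
  | 0 => x
  | ℓ + 1 => fun v =>
      net.up ℓ (HRMPNN.h net H x ℓ v)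
        (net.agg ℓ (HRMPNN.h net H x ℓ v)
          ((H.incid v).val.map fun ei =>
            net.msg ℓ ei.1.1
              {p : (Fin (net.d ℓ) → ℝ) × ℕ |
                ∃ j : Fin (ar ei.1.1), j ≠ ei.2 ∧
                  p = (HRMPNN.h net H x ℓ (ei.1.2 j), (j : ℕ))}))

/-- A query `q = (q, ũ, t)` on a relational hypergraph: a relation type `q`, a
querying position `t`, and an assignment `ũ` of nodes to the remaining positions. -/
structure Query (V R : Type) (ar : R → ℕ) where
  rel : R
  t : Fin (ar rel)
  u : {j : Fin (ar rel) // j ≠ t} → V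

/-- A hypergraph conditional MPNN (HC-MPNN): an initialization function together with
arbitrary relation-specific message, aggregation and update functions per layer (the
message function may additionally depend on the query). -/
structure HCMPNN (V R : Type) (ar : R → ℕ) where
  d : ℕ → ℕ
  M : ℕ → Type
  A : ℕ → Type
  init : V → Query V R ar → Fin (d 0) → ℝ
  msg : (ℓ : ℕ) → R → Set ((Fin (d ℓ) → ℝ) × ℕ) → Query V R ar → M ℓ
  agg : (ℓ : ℕ) → (Fin (d ℓ) → ℝ) → Multiset (M ℓ) → A ℓ
  up : (ℓ : ℕ) → (Fin (d ℓ) → ℝ) → A ℓ → Fin (d (ℓ + 1)) → ℝ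

/-- The conditional feature maps `h⁽ℓ⁾_{·|q}` computed by an HC-MPNN on a relational
hypergraph `H` for the query `q`. -/
def HCMPNN.h [DecidableEq V] (net : HCMPNN V R ar) (H : RelHG V R ar)
    (q : Query V R ar) : (ℓ : ℕ) → V → Fin (net.d ℓ) → ℝ
  | 0 => fun v => net.init v q
  | ℓ + 1 => fun v =>
      net.up ℓ (HCMPNN.h net H q ℓ v)
        (net.agg ℓ (HCMPNN.h net H q ℓ v)
          ((H.incid v).val.map fun ei =>
            net.msg ℓ ei.1.1
              {p : (Fin (net.d ℓ) → ℝ) × ℕ |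
                ∃ j : Fin (ar ei.1.1), j ≠ ei.2 ∧
                  p = (HCMPNN.h net H q ℓ (ei.1.2 j), (j : ℕ))}
              q))

/-- A node coloring `c` satisfies generalized target node distinguishability with
respect to the query `q = (q, ũ, t)`: nodes in `ũ` get colors different from all
nodes outside `ũ`, and distinct nodes occurring in `ũ` get distinct colors. -/
def GTND {D : Type} (c : V → D) (q : Query V R ar) : Prop :=
  (∀ (i : {j : Fin (ar q.rel) // j ≠ q.t}) (v : V),
      v ∉ Set.range q.u → c (q.u i) ≠ c v) ∧
  (∀ i j : {j : Fin (ar q.rel) // j ≠ q.t}, q.u i ≠ q.u j → c (q.u i) ≠ c (q.u j))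

/-- The tail query `(q, (u), 2)` on a knowledge graph: predict the tail of `q(u, ?)`. -/
def tailQuery {V R : Type} (q : R) (u : V) : Query V R (fun _ => 2) :=
  ⟨q, ⟨1, Nat.one_lt_two⟩, fun _ => u⟩

/-- The test `hcwl₂` on a knowledge graph `H` (with the canonical injective `τ`),
computing pairwise colorings from the initial pairwise coloring `η`. -/
def hcwl2 {V R D : Type} [DecidableEq V] (H : RelHG V R (fun _ => 2))
    (η : V → V → D) : (ℓ : ℕ) → V → V → WLC D R ℓ
  | 0 => η
  | ℓ + 1 => fun u v =>
      ⟨hcwl2 H η ℓ u v,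
        (H.incid v).val.map fun ei =>
          ({p : WLC D R ℓ × ℕ |
              ∃ j : Fin 2, j ≠ ei.2 ∧
                p = (hcwl2 H η ℓ u (ei.1.2 j), (j : ℕ))},
            ei.1.1)⟩

/-- A knowledge graph is a relational hypergraph in which every relation has arity
exactly `2`.  `kgFact r u v` is the binary fact `r(u, v)`. -/
def kgFact {V R : Type} (r : R) (u v : V) :
    (Σ r' : R, Fin ((fun _ : R => 2) r') → V) :=
  ⟨r, ![u, v]⟩

/-- The auxiliary knowledge graph `G²` of a knowledge graph `G`: its nodes are the
pairs `V × V`, and it has the fact `r((u, w), (u, v))` for every fact `r(w, v)` of `G`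
and every `u ∈ V`. -/
def auxKG {V R : Type} [Fintype V] [DecidableEq V] [DecidableEq R]
    (H : RelHG V R (fun _ => 2)) : RelHG (V × V) R (fun _ => 2) where
  edges :=
    (H.edges ×ˢ (Finset.univ : Finset V)).image fun p =>
      kgFact p.1.1 (p.2, p.1.2 ⟨0, Nat.zero_lt_two⟩) (p.2, p.1.2 ⟨1, Nat.one_lt_two⟩)


lemma vec2_pair {V : Type} (u : V) (t : Fin 2 → V) (i : Fin 2) :
    (![(u, t 0), (u, t 1)] : Fin 2 → V × V) i = (u, t i) := by
  fin_cases i <;> simp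

lemma kgFact_pair_inj {V R : Type} {r r' : R} {u : V} {t t' : Fin 2 → V}
    (h : kgFact r (u, t 0) (u, t 1) = kgFact r' (u, t' 0) (u, t' 1)) :
    r = r' ∧ t = t' := by
  obtain ⟨h1, h2⟩ := Sigma.mk.inj_iff.mp h
  subst h1
  refine ⟨rfl, ?_⟩
  have h2' := eq_of_heq h2
  funext i
  have := congrFun h2' i
  rw [vec2_pair, vec2_pair] at this
  exact (Prod.mk.injEq _ _ _ _ ▸ this).2

def auxEmb {V R : Type} (u : V) :
    (Σ e : Σ r : R, Fin ((fun _ : R => 2) r) → V, Fin ((fun _ : R => 2) e.1)) ↪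
      (Σ e : Σ r : R, Fin ((fun _ : R => 2) r) → (V × V), Fin ((fun _ : R => 2) e.1)) where
  toFun := fun p => ⟨kgFact p.1.1 (u, p.1.2 0) (u, p.1.2 1), p.2⟩
  inj' := by
    rintro ⟨⟨r, t⟩, i⟩ ⟨⟨r', t'⟩, i'⟩ h
    obtain ⟨h1, h2⟩ := Sigma.mk.inj_iff.mp h
    obtain ⟨hr, ht⟩ := kgFact_pair_inj h1
    subst hr; subst ht
    cases eq_of_heq h2
    rfl

lemma incid_auxKG {V R : Type} [Fintype V] [DecidableEq V] [DecidableEq R]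
    (H : RelHG V R (fun _ => 2)) (u v : V) :
    (auxKG H).incid (u, v) = (H.incid v).map (auxEmb u) := by
  ext q
  constructor
  · intro hq
    obtain ⟨⟨r, s⟩, i⟩ := q
    obtain ⟨hmem, hi⟩ := Finset.mem_filter.mp hq
    have hmem' : (⟨r, s⟩ : Σ r' : R, Fin ((fun _ : R => 2) r') → (V × V)) ∈ (auxKG H).edges :=
      (Finset.mem_sigma.mp hmem).1
    obtain ⟨⟨⟨r₀, t⟩, w⟩, hp, hew⟩ := Finset.mem_image.mp hmem'
    have he : (⟨r₀, t⟩ : Σ r' : R, Fin ((fun _ : R => 2) r') → V) ∈ H.edges :=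
      (Finset.mem_product.mp hp).1
    have hs : s i = (w, t i) := by
      obtain ⟨h1, h2⟩ := Sigma.mk.inj_iff.mp hew
      cases h1
      rw [← eq_of_heq h2]
      exact vec2_pair w t i
    have hi' : s i = (u, v) := hi
    rw [hs] at hi'
    have hw : u = w := ((Prod.mk.injEq _ _ _ _ ▸ hi').1).symm
    have htv : t i = v := (Prod.mk.injEq _ _ _ _ ▸ hi').2
    subst hw
    refine Finset.mem_map.mpr ⟨⟨⟨r₀, t⟩, i⟩, ?_, ?_⟩
    · exact Finset.mem_filter.mpr ⟨Finset.mem_sigma.mpr ⟨he, Finset.mem_univ _⟩, htv⟩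
    · show (⟨kgFact r₀ (u, t 0) (u, t 1), i⟩ :
          Σ e : Σ r' : R, Fin ((fun _ : R => 2) r') → (V × V), Fin ((fun _ : R => 2) e.1)) =
        ⟨⟨r, s⟩, i⟩
      exact congrArg (fun e : Σ r' : R, Fin ((fun _ : R => 2) r') → (V × V) =>
        (⟨e, i⟩ : Σ e : Σ r' : R, Fin ((fun _ : R => 2) r') → (V × V), Fin ((fun _ : R => 2) e.1))) hew
  · intro hq
    obtain ⟨⟨⟨r₀, t⟩, j⟩, hmem, rfl⟩ := Finset.mem_map.mp hq
    obtain ⟨hm, hv⟩ := Finset.mem_filter.mp hmem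
    have he : (⟨r₀, t⟩ : Σ r' : R, Fin ((fun _ : R => 2) r') → V) ∈ H.edges :=
      (Finset.mem_sigma.mp hm).1
    refine Finset.mem_filter.mpr ⟨Finset.mem_sigma.mpr ⟨?_, Finset.mem_univ _⟩, ?_⟩
    · exact Finset.mem_image.mpr ⟨⟨⟨r₀, t⟩, u⟩,
        Finset.mem_product.mpr ⟨he, Finset.mem_univ _⟩, rfl⟩
    · show (kgFact r₀ (u, t 0) (u, t 1)).2 j = (u, v)
      have hv' : t j = v := hv
      rw [show (kgFact r₀ (u, t 0) (u, t 1)).2 j = (![(u, t 0), (u, t 1)] : Fin 2 → V × V) j from rfl,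
        vec2_pair, hv']

lemma hrwl_auxKG_eq_hcwl2 {V R D : Type} [Fintype V] [DecidableEq V] [DecidableEq R]
    (H : RelHG V R (fun _ => 2)) (η : V → V → D) (ℓ : ℕ) :
    ∀ u v : V,
      RelHG.hrwl (auxKG H) (fun p => η p.1 p.2) ℓ (u, v) = hcwl2 H η ℓ u v := by
  induction ℓ with
  | zero => intro u v; rfl
  | succ ℓ ih =>
    intro u v
    show (⟨_, _⟩ : _ × _) = ⟨_, _⟩
    refine Prod.ext (ih u v) ?_
    show ((auxKG H).incid (u, v)).val.map _ = (H.incid v).val.map _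
    rw [incid_auxKG, Finset.map_val, Multiset.map_map]
    refine Multiset.map_congr rfl ?_
    rintro ⟨⟨r₀, t⟩, j⟩ -
    simp only [Function.comp_apply, auxEmb, Function.Embedding.coeFn_mk]
    refine Prod.ext ?_ rfl
    show {p : WLC D R ℓ × ℕ | _} = {p : WLC D R ℓ × ℕ | _}
    ext p
    simp only [Set.mem_setOf_eq]
    constructor
    · rintro ⟨k, hk, rfl⟩
      refine ⟨k, hk, ?_⟩
      show (RelHG.hrwl (auxKG H) (fun p => η p.1 p.2) ℓ ((kgFact r₀ (u, t 0) (u, t 1)).2 k), (k : ℕ)) = _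
      rw [show (kgFact r₀ (u, t 0) (u, t 1)).2 k = (![(u, t 0), (u, t 1)] : Fin 2 → V × V) k from rfl,
        vec2_pair, ih]
    · rintro ⟨k, hk, rfl⟩
      refine ⟨k, hk, ?_⟩
      show _ = (RelHG.hrwl (auxKG H) (fun p => η p.1 p.2) ℓ ((kgFact r₀ (u, t 0) (u, t 1)).2 k), (k : ℕ))
      rw [show (kgFact r₀ (u, t 0) (u, t 1)).2 k = (![(u, t 0), (u, t 1)] : Fin 2 → V × V) k from rfl,
        vec2_pair, ih]

/-- Let `G = (V, E, R, c, η)` be a knowledge graph with pairwise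
coloring `η`.  For all `ℓ ≥ 0`, the pairwise coloring `hcwl₂⁽ℓ⁾` computed on `G`
coincides with the node coloring `hrwl₁⁽ℓ⁾` computed on the auxiliary knowledge graph
`G²` (with node coloring `c_η((u, v)) = η(u, v)`): they induce the same partition of
`V × V`. -/
theorem hcwl2_coincides_hrwl_on_auxKG
    {V R C D : Type} [Fintype V] [DecidableEq V] [Fintype R] [DecidableEq R]
    (H : RelHG V R (fun _ => 2)) (c : V → C) (η : V → V → D) (ℓ : ℕ) :
    ∀ u v u' v' : V,
      hcwl2 H η ℓ u v = hcwl2 H η ℓ u' v' ↔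
        RelHG.hrwl (auxKG H) (fun p => η p.1 p.2) ℓ (u, v) =
          RelHG.hrwl (auxKG H) (fun p => η p.1 p.2) ℓ (u', v') := by
  intro u v u' v'
  rw [hrwl_auxKG_eq_hcwl2, hrwl_auxKG_eq_hcwl2]
end

section
/- Let G = (V, E, R, x, ζ) be a relational hypergraph with feature map x and a k-ary node coloring ζ : V^k → D satisfying generalized target node distinguishability, and fix a tail query q = (q, ũ, k) with q ∈ R, ar(q) = k. For every L ≥ 0 there exists an HC-MPNN restricted to tail predictions with L layers such that for all 0 ≤ ℓ ≤ L, hcwl_k^(ℓ) ≡ h_q^(ℓ) (the test coloring and the k-ary feature map (ũ, v) ↦ h_{v|(q,ũ,k)}^(ℓ) induce the same partition of V^k at every layer). -/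
variable {V R D : Type} {ar : R → ℕ}

/-- The last (tail) position `t = k` of a relation `q` of arity `k = ar q ≥ 1`. -/
def tailPos {R : Type} {ar : R → ℕ} (q : R) (hq : 1 ≤ ar q) : Fin (ar q) :=
  ⟨ar q - 1, by omega⟩

/-- A `k`-ary coloring `ζ(ut, v)` (with `ut` indexed by `ι ≅ Fin (k-1)`) satisfies
generalized target node distinguishability: for every `ut`, nodes in `ut` get colors
different from all nodes outside `ut`, and distinct nodes occurring in `ut` get
distinct colors. -/
def gtndK {V ι D : Type} (ζ : (ι → V) → V → D) : Prop :=
  ∀ ut : ι → V,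
    (∀ (i : ι) (v : V), v ∉ Set.range ut → ζ ut (ut i) ≠ ζ ut v) ∧
    (∀ i j : ι, ut i ≠ ut j → ζ ut (ut i) ≠ ζ ut (ut j))

/-- The test `hcwl_k` on a relational hypergraph `H` (with the canonical injective
`τ`), computing `k`-ary colorings `(ut, v) ↦ hcwl_k⁽ℓ⁾(ut, v)` from the initial `k`-ary
coloring `ζ`; the tuple `ut` is carried along unchanged. -/
def hcwlk {V R D : Type} [DecidableEq V] {ar : R → ℕ} (H : RelHG V R ar)
    {ι : Type} (ζ : (ι → V) → V → D) : (ℓ : ℕ) → (ι → V) → V → WLC D R ℓ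
  | 0 => ζ
  | ℓ + 1 => fun ut v =>
      ⟨hcwlk H ζ ℓ ut v,
        (H.incid v).val.map fun ei =>
          ({p : WLC D R ℓ × ℕ |
              ∃ j : Fin (ar ei.1.1), j ≠ ei.2 ∧
                p = (hcwlk H ζ ℓ ut (ei.1.2 j), (j : ℕ))},
            ei.1.1)⟩

set_option linter.unusedSectionVars false
noncomputable section AuxHCWL
open Classical
/-- An injection of a finite set into `ℝ` (on the set). -/
noncomputable def encOn {α : Type*} (S : Set α) (hS : S.Finite) : α → ℝ :=
  fun a => if h : a ∈ S then ((@Fintype.equivFin S hS.fintype ⟨a, h⟩ : Fin _) : ℕ) else 0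

lemma encOn_injOn {α : Type*} (S : Set α) (hS : S.Finite) :
    Set.InjOn (encOn S hS) S := by
  intro a ha b hb hab
  simp only [encOn, dif_pos ha, dif_pos hb, Nat.cast_inj] at hab
  have h2 := (@Fintype.equivFin S hS.fintype).injective (Fin.ext hab)
  exact congrArg Subtype.val h2

variable {V R D : Type} [Fintype V] [DecidableEq V]
  {ar : R → ℕ} (H : RelHG V R ar) {ι : Type} [Finite ι] (ζ : (ι → V) → V → D)

def Srange (ℓ : ℕ) : Set (WLC D R ℓ) :=
  Set.range (fun p : (ι → V) × V => hcwlk H ζ ℓ p.1 p.2)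

lemma Srange_finite (ℓ : ℕ) : (Srange H ζ ℓ).Finite := Set.finite_range _

noncomputable def encW (ℓ : ℕ) : WLC D R ℓ → ℝ :=
  encOn (Srange H ζ ℓ) (Srange_finite H ζ ℓ)

lemma encW_injOn (ℓ : ℕ) : Set.InjOn (encW H ζ ℓ) (Srange H ζ ℓ) :=
  encOn_injOn _ _

lemma mem_Srange (ℓ : ℕ) (ut : ι → V) (v : V) : hcwlk H ζ ℓ ut v ∈ Srange H ζ ℓ :=
  ⟨(ut, v), rfl⟩

end AuxHCWL

section NetConstruction
open Classical
variable {V R D : Type} [Fintype V] [DecidableEq V]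
  {ar : R → ℕ} (q : R) (hq : 1 ≤ ar q)

/-- The HC-MPNN simulating `hcwlk` for tail queries on relation `q`. -/
noncomputable def theNet (H : RelHG V R ar)
    (ζ : ({j : Fin (ar q) // j ≠ tailPos q hq} → V) → V → D) : HCMPNN V R ar where
  d := fun _ => 1
  M := fun ℓ => Set (WLC D R ℓ × ℕ) × R
  A := fun ℓ => Multiset (Set (WLC D R ℓ × ℕ) × R)
  init := fun v qu =>
    if h : ∃ ut, qu = ⟨q, tailPos q hq, ut⟩ then
      fun _ => encW H ζ 0 (ζ h.choose v)
    else fun _ => 0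
  msg := fun ℓ r s _ =>
    ({p : WLC D R ℓ × ℕ | p.1 ∈ Srange H ζ ℓ ∧
        ((fun _ => encW H ζ ℓ p.1), p.2) ∈ s}, r)
  agg := fun _ _ ms => ms
  up := fun ℓ h ms =>
    if hc : ∃ c : WLC D R ℓ × Multiset (Set (WLC D R ℓ × ℕ) × R),
        (c : WLC D R (ℓ + 1)) ∈ Srange H ζ (ℓ + 1) ∧
        encW H ζ ℓ c.1 = h 0 ∧ c.2 = ms then
      fun _ => encW H ζ (ℓ + 1) hc.choose
    else fun _ => 0

lemma query_u_inj {ut ut' : {j : Fin (ar q) // j ≠ tailPos q hq} → V}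
    (h : (⟨q, tailPos q hq, ut⟩ : Query V R ar) = ⟨q, tailPos q hq, ut'⟩) :
    ut = ut' := by
  injection h with h1 h2 h3

lemma hcwlk_succ_fst (H : RelHG V R ar)
    (ζ : ({j : Fin (ar q) // j ≠ tailPos q hq} → V) → V → D)
    (ℓ : ℕ) (ut : {j : Fin (ar q) // j ≠ tailPos q hq} → V) (v : V) :
    (hcwlk H ζ (ℓ + 1) ut v : WLC D R ℓ × Multiset (Set (WLC D R ℓ × ℕ) × R)).1
      = hcwlk H ζ ℓ ut v := rfl

lemma theNet_h (H : RelHG V R ar)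
    (ζ : ({j : Fin (ar q) // j ≠ tailPos q hq} → V) → V → D) :
    ∀ (ℓ : ℕ) (ut : {j : Fin (ar q) // j ≠ tailPos q hq} → V) (v : V),
      (theNet q hq H ζ).h H ⟨q, tailPos q hq, ut⟩ ℓ v
        = fun _ => encW H ζ ℓ (hcwlk H ζ ℓ ut v) := by
  intro ℓ
  induction ℓ with
  | zero =>
    intro ut v
    have hex : ∃ ut', (⟨q, tailPos q hq, ut⟩ : Query V R ar)
        = ⟨q, tailPos q hq, ut'⟩ := ⟨ut, rfl⟩
    have hch : hex.choose = ut := (query_u_inj q hq hex.choose_spec).symm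
    show (theNet q hq H ζ).init v ⟨q, tailPos q hq, ut⟩ = _
    simp only [theNet, dif_pos hex, hch]
    rfl
  | succ ℓ ih =>
    intro ut v
    -- the decoded message sets agree with the `hcwlk` neighborhood sets
    have hmsg : ∀ ei ∈ (H.incid v).val,
        (theNet q hq H ζ).msg ℓ ei.1.1
          {p : (Fin 1 → ℝ) × ℕ | ∃ j : Fin (ar ei.1.1), j ≠ ei.2 ∧
              p = ((theNet q hq H ζ).h H ⟨q, tailPos q hq, ut⟩ ℓ (ei.1.2 j), (j : ℕ))}
          ⟨q, tailPos q hq, ut⟩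
        = ({p : WLC D R ℓ × ℕ | ∃ j : Fin (ar ei.1.1), j ≠ ei.2 ∧
              p = (hcwlk H ζ ℓ ut (ei.1.2 j), (j : ℕ))}, ei.1.1) := by
      intro ei _
      refine Prod.ext ?_ rfl
      ext ⟨c, n⟩
      show (c ∈ Srange H ζ ℓ ∧ ∃ j : Fin (ar ei.1.1), j ≠ ei.2 ∧
          ((fun _ => encW H ζ ℓ c), n)
            = ((theNet q hq H ζ).h H ⟨q, tailPos q hq, ut⟩ ℓ (ei.1.2 j), (j : ℕ)))
        ↔ ∃ j : Fin (ar ei.1.1), j ≠ ei.2 ∧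
            (c, n) = (hcwlk H ζ ℓ ut (ei.1.2 j), (j : ℕ))
      simp only [ih]
      constructor
      · rintro ⟨hc, j, hj, he⟩
        have e1 : encW H ζ ℓ c = encW H ζ ℓ (hcwlk H ζ ℓ ut (ei.1.2 j)) :=
          congrFun (congrArg Prod.fst he) ⟨0, Nat.one_pos⟩
        have e2 : n = (j : ℕ) := congrArg Prod.snd he
        exact ⟨j, hj,
          Prod.ext (encW_injOn H ζ ℓ hc (mem_Srange H ζ ℓ ut (ei.1.2 j)) e1) e2⟩
      · rintro ⟨j, hj, he⟩
        have e1 : c = hcwlk H ζ ℓ ut (ei.1.2 j) := congrArg Prod.fst he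
        have e2 : n = (j : ℕ) := congrArg Prod.snd he
        refine ⟨e1 ▸ mem_Srange H ζ ℓ ut (ei.1.2 j), j, hj, ?_⟩
        rw [e1, e2]
    -- the aggregated multiset is exactly the second component of `hcwlk (ℓ+1)`
    have hms : ((H.incid v).val.map fun ei =>
          (theNet q hq H ζ).msg ℓ ei.1.1
            {p : (Fin 1 → ℝ) × ℕ | ∃ j : Fin (ar ei.1.1), j ≠ ei.2 ∧
                p = ((theNet q hq H ζ).h H ⟨q, tailPos q hq, ut⟩ ℓ (ei.1.2 j), (j : ℕ))}
            ⟨q, tailPos q hq, ut⟩)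
        = (hcwlk H ζ (ℓ + 1) ut v : WLC D R ℓ × Multiset (Set (WLC D R ℓ × ℕ) × R)).2 :=
      Multiset.map_congr rfl hmsg
    -- the update function outputs the encoding of the refined color
    have key : ∀ (a : Fin 1 → ℝ) (ms : Multiset (Set (WLC D R ℓ × ℕ) × R)),
        a = (fun _ => encW H ζ ℓ (hcwlk H ζ ℓ ut v)) →
        ms = (hcwlk H ζ (ℓ + 1) ut v : WLC D R ℓ × Multiset (Set (WLC D R ℓ × ℕ) × R)).2 →
        (theNet q hq H ζ).up ℓ a ms
          = fun _ => encW H ζ (ℓ + 1) (hcwlk H ζ (ℓ + 1) ut v) := by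
      rintro a ms rfl rfl
      have hcond : ∃ c : WLC D R ℓ × Multiset (Set (WLC D R ℓ × ℕ) × R),
          (c : WLC D R (ℓ + 1)) ∈ Srange H ζ (ℓ + 1) ∧
          encW H ζ ℓ c.1 = (fun _ : Fin 1 => encW H ζ ℓ (hcwlk H ζ ℓ ut v)) 0 ∧
          c.2 = (hcwlk H ζ (ℓ + 1) ut v :
            WLC D R ℓ × Multiset (Set (WLC D R ℓ × ℕ) × R)).2 :=
        ⟨(hcwlk H ζ (ℓ + 1) ut v :
            WLC D R ℓ × Multiset (Set (WLC D R ℓ × ℕ) × R)),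
          mem_Srange H ζ (ℓ + 1) ut v, rfl, rfl⟩
      show dite _ _ _ = _
      refine (dif_pos hcond).trans ?_
      have spec := hcond.choose_spec
      have h1mem : hcond.choose.1 ∈ Srange H ζ ℓ := by
        obtain ⟨p, hp⟩ := spec.1
        have : hcond.choose.1 = hcwlk H ζ ℓ p.1 p.2 := by
          rw [← hp]; exact hcwlk_succ_fst q hq H ζ ℓ p.1 p.2
        rw [this]
        exact mem_Srange H ζ ℓ p.1 p.2
      have c1eq : hcond.choose.1 = hcwlk H ζ ℓ ut v :=
        encW_injOn H ζ ℓ h1mem (mem_Srange H ζ ℓ ut v) spec.2.1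
      have ceq : hcond.choose
          = (hcwlk H ζ (ℓ + 1) ut v :
              WLC D R ℓ × Multiset (Set (WLC D R ℓ × ℕ) × R)) :=
        Prod.ext c1eq spec.2.2
      rw [ceq]
      rfl
    exact key _ _ (ih ut v) hms

end NetConstruction

/-- Let `G = (V, E, R, x, ζ)` be a relational hypergraph with
feature map `x` and a `k`-ary coloring `ζ` satisfying generalized target node
distinguishability, and fix a tail query `(q, ut, k)` with `q ∈ R` of arity
`k = ar q`.  For every `L ≥ 0` there is an HC-MPNN restricted to tail predictions
with `L` layers such that for all `0 ≤ ℓ ≤ L`, `hcwl_k⁽ℓ⁾ ≡ h_q⁽ℓ⁾`: the test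
coloring and the `k`-ary feature map `(ut, v) ↦ h⁽ℓ⁾_{v|(q,ut,k)}` induce the same
partition of `V^k` at every layer. -/
theorem exists_HCMPNN_matching_hcwlk
    {V R D : Type} [Fintype V] [DecidableEq V] [Fintype R] [DecidableEq R]
    {ar : R → ℕ} (H : RelHG V R ar) {d0 : ℕ} (x : V → Fin d0 → ℝ)
    (q : R) (hq : 1 ≤ ar q)
    (ζ : ({j : Fin (ar q) // j ≠ tailPos q hq} → V) → V → D)
    (hζ : gtndK ζ)
    (L : ℕ) :
    ∃ net : HCMPNN V R ar,
      ∀ ℓ ≤ L, ∀ (ut ut' : {j : Fin (ar q) // j ≠ tailPos q hq} → V) (v v' : V),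
        hcwlk H ζ ℓ ut v = hcwlk H ζ ℓ ut' v' ↔
          net.h H ⟨q, tailPos q hq, ut⟩ ℓ v = net.h H ⟨q, tailPos q hq, ut'⟩ ℓ v' := by
  refine ⟨theNet q hq H ζ, fun ℓ _ ut ut' v v' => ?_⟩
  rw [theNet_h q hq H ζ, theNet_h q hq H ζ]
  constructor
  · intro h; rw [h]
  · intro h
    exact encW_injOn H ζ ℓ (mem_Srange H ζ ℓ ut v) (mem_Srange H ζ ℓ ut' v')
      (congrFun h ⟨0, Nat.one_pos⟩)
end
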